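/- Let g : ℝ → ℝ be continuously differentiable with g' globally α*-Hölder continuous for some α* ∈ (0,1], and suppose g(t) = 0 implies g'(t) = 0 for all t. If g(0) = R^{1+α*} for some R > 0 and g'(s) > C_g R^{α*} for all s ∈ [−R, 0], where C_g := max{1, [g']_{C^{0,α*}}}, then a contradiction follows; i.e., no such configuration exists. Equivalently: if g(0) = R^{1+α*} > 0 then g'(0) ≤ 2 C_g R^{α*}. -/

import Mathlib

theorem stmt2 {αs : ℝ} (hαs : 0 < αs ∧ αs ≤ 1) (g : ℝ → ℝ) (hg : ContDiff ℝ 1 g)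
    {H : ℝ} (hH : 0 ≤ H)
    (hHolder : ∀ s t : ℝ, |deriv g s - deriv g t| ≤ H * |s - t| ^ αs)
    (htouch : ∀ t, g t = 0 → deriv g t = 0)
    {R : ℝ} (hR : 0 < R) (hg0 : g 0 = R ^ (1 + αs)) :
    deriv g 0 ≤ 2 * max 1 H * R ^ αs := by
  obtain ⟨hα0, hα1⟩ := hαs
  by_contra hcon
  push_neg at hcon
  set C := max 1 H with hC
  have hC1 : (1:ℝ) ≤ C := le_max_left _ _
  have hHC : H ≤ C := le_max_right _ _
  have hRα : 0 < R ^ αs := Real.rpow_pos_of_pos hR αs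
  have hCR : 0 < C * R ^ αs := by nlinarith
  have hdiff : Differentiable ℝ g := hg.differentiable one_ne_zero
  have hcont : Continuous (deriv g) := hg.continuous_deriv le_rfl
  have hlow : ∀ s ∈ Set.Icc (-R) 0, C * R ^ αs < deriv g s := by
    intro s hs
    obtain ⟨hs1, hs2⟩ := hs
    have h1 : |deriv g 0 - deriv g s| ≤ H * |0 - s| ^ αs := hHolder 0 s
    have habs : |0 - s| ≤ R := by
      rw [abs_le]; constructor <;> linarith
    have h2 : |0 - s| ^ αs ≤ R ^ αs :=
      Real.rpow_le_rpow (abs_nonneg _) habs hα0.le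
    have h3 : H * |0 - s| ^ αs ≤ C * R ^ αs := by
      have := Real.rpow_nonneg (abs_nonneg (0 - s)) αs
      nlinarith
    have h4 : deriv g 0 - deriv g s ≤ C * R ^ αs :=
      le_trans (le_trans (le_abs_self _) h1) h3
    have h5 : 2 * C * R ^ αs < deriv g 0 := hcon
    linarith
  have hint : IntervalIntegrable (deriv g) MeasureTheory.volume (-R) 0 :=
    hcont.intervalIntegrable _ _
  have hFTC : ∫ s in (-R)..0, deriv g s = g 0 - g (-R) :=
    intervalIntegral.integral_deriv_eq_sub (fun x _ => hdiff x) hint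
  have hge : R * (C * R ^ αs) ≤ ∫ s in (-R)..0, deriv g s := by
    have hmono := intervalIntegral.integral_mono_on (by linarith : (-R:ℝ) ≤ 0)
      (intervalIntegrable_const (c := C * R ^ αs)) hint
      (fun s hs => (hlow s hs).le)
    rw [intervalIntegral.integral_const] at hmono
    simpa [smul_eq_mul, sub_neg_eq_add] using hmono
  have hRpow : R ^ (1 + αs) = R * R ^ αs := by
    rw [Real.rpow_add hR, Real.rpow_one]
  have hgR : g (-R) ≤ 0 := by
    have h6 : R ^ (1 + αs) ≤ R * (C * R ^ αs) := by
      rw [hRpow]; nlinarith [mul_nonneg (mul_pos hR hRα).le (sub_nonneg.mpr hC1)]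
    nlinarith [hge, hFTC]
  have hg0pos : 0 ≤ g 0 := by rw [hg0]; exact (Real.rpow_pos_of_pos hR _).le
  have hIVT := intermediate_value_Icc (by linarith : (-R:ℝ) ≤ 0)
    hg.continuous.continuousOn
  obtain ⟨t, htmem, hgt⟩ := hIVT ⟨hgR, hg0pos⟩
  have := htouch t hgt
  have := hlow t htmem
  linarith
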